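/- For f = x_0 x_2³ + x_1 x_2² x_3 + x_3⁴ in four variables, Hess(f) = 9 x_2⁸, i.e., the Hessian is the 8-th power of a linear form up to a nonzero scalar; moreover f has no linear factor. -/

import Mathlib

open MvPolynomial

/-- The Hessian determinant: determinant of the matrix of second partial derivatives. -/
noncomputable def hess {d : ℕ} (f : MvPolynomial (Fin d) ℂ) : MvPolynomial (Fin d) ℂ :=
  Matrix.det (Matrix.of fun i j : Fin d => MvPolynomial.pderiv i (MvPolynomial.pderiv j f))

lemma pderiv_natCast' {σ : Type*} [DecidableEq σ] (i : σ) (n : ℕ) :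
    pderiv i ((n : ℕ) : MvPolynomial σ ℂ) = 0 := by
  rw [← map_natCast (C : ℂ →+* MvPolynomial σ ℂ) n, pderiv_C]

lemma deg2 (m : Fin 4 →₀ ℕ) (h0 : m ≠ 0) (h1 : ∀ i, m ≠ Finsupp.single i 1) :
    2 ≤ ∑ i ∈ m.support, m i := by
  obtain ⟨a, ha⟩ : ∃ a, m a ≠ 0 := by
    by_contra h; push_neg at h; exact h0 (Finsupp.ext h)
  have haS : a ∈ m.support := Finsupp.mem_support_iff.2 ha
  rcases Nat.lt_or_ge (m a) 2 with h2 | h2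
  · have hma : m a = 1 := by omega
    obtain ⟨b, hb, hba⟩ : ∃ b, m b ≠ 0 ∧ b ≠ a := by
      by_contra h; push_neg at h
      refine h1 a (Finsupp.ext fun x => ?_)
      by_cases hx : x = a
      · subst hx; simp [hma]
      · have := h x
        simp [Finsupp.single_apply, Ne.symm hx, hx]
        by_contra hxn
        exact hx (this hxn)
    have hbS : b ∈ m.support := Finsupp.mem_support_iff.2 hb
    have hsub : ({a, b} : Finset (Fin 4)) ⊆ m.support := by
      intro x hx; simp at hx; rcases hx with rfl | rfl <;> assumption
    calc 2 = m a + 1 := by omega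
    _ ≤ m a + m b := by have : 1 ≤ m b := Nat.one_le_iff_ne_zero.2 hb; omega
    _ = ∑ i ∈ ({a, b} : Finset (Fin 4)), m i := by rw [Finset.sum_pair (Ne.symm hba)]
    _ ≤ ∑ i ∈ m.support, m i := Finset.sum_le_sum_of_subset hsub
  · calc 2 ≤ m a := h2
    _ ≤ ∑ i ∈ m.support, m i := Finset.single_le_sum (fun _ _ => Nat.zero_le _) haS

lemma affine {l : MvPolynomial (Fin 4) ℂ} (h : l.totalDegree ≤ 1) :
    l = C (coeff 0 l) + ∑ i : Fin 4, C (coeff (Finsupp.single i 1) l) * X i := by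
  ext m
  rw [coeff_add, coeff_C]
  rw [MvPolynomial.coeff_sum]
  simp only [coeff_C_mul, coeff_X']
  by_cases h0 : m = 0
  · subst h0
    simp [Finsupp.single_eq_zero]
  by_cases h1 : ∃ i, m = Finsupp.single i 1
  · obtain ⟨i, rfl⟩ := h1
    have : Finsupp.single i 1 ≠ (0 : Fin 4 →₀ ℕ) := by simp
    simp [Finsupp.single_eq_single_iff, Finset.sum_ite_eq', this, h0]
    exact fun hc => absurd hc.symm this
  · push_neg at h1
    have h2 : 2 ≤ ∑ i ∈ m.support, m i := deg2 m h0 (fun i => h1 i)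
    have hz : coeff m l = 0 := coeff_eq_zero_of_totalDegree_lt (lt_of_le_of_lt h (by omega))
    rw [hz]
    rw [if_neg (fun hc => h0 hc.symm)]
    rw [Finset.sum_eq_zero, zero_add]
    intro i _
    rw [if_neg (fun hc => h1 i hc.symm), mul_zero]

set_option maxHeartbeats 2000000 in
theorem stmt_14 (f : MvPolynomial (Fin 4) ℂ)
    (hf : f = X 0 * X 2 ^ 3 + X 1 * X 2 ^ 2 * X 3 + X 3 ^ 4) :
    hess f = C 9 * X 2 ^ 8
    ∧ ¬ ∃ l g : MvPolynomial (Fin 4) ℂ, l.totalDegree = 1 ∧ f = l * g := by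
  constructor
  · subst hf
    rw [hess]
    have hm : (Matrix.of fun i j : Fin 4 => MvPolynomial.pderiv i (MvPolynomial.pderiv j
        (X 0 * X 2 ^ 3 + X 1 * X 2 ^ 2 * X 3 + X 3 ^ 4 : MvPolynomial (Fin 4) ℂ))) =
      !![0, 0, 3 * X 2 ^ 2, 0;
         0, 0, 2 * X 2 * X 3, X 2 ^ 2;
         3 * X 2 ^ 2, 2 * X 2 * X 3, 6 * X 0 * X 2 + 2 * X 1 * X 3, 2 * X 1 * X 2;
         0, X 2 ^ 2, 2 * X 1 * X 2, 12 * X 3 ^ 2] := by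
      ext i j
      fin_cases i <;> fin_cases j <;>
        · simp [pderiv_mul, pderiv_X, pderiv_pow, Pi.single_apply, pderiv_natCast',
            -Nat.cast_ofNat]
          try ring
    rw [hm]
    simp [Matrix.det_succ_row_zero, Fin.sum_univ_succ, Fin.succAbove, Matrix.submatrix_apply]
    have h9 : (C 9 : MvPolynomial (Fin 4) ℂ) = 9 := map_ofNat C 9
    rw [h9]
    ring
  ·
    rintro ⟨l, g, hdeg, hfg⟩
    rw [hf] at hfg
    set a : Fin 4 → ℂ := fun i => coeff (Finsupp.single i 1) l with ha
    set c : ℂ := coeff 0 l with hc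
    have hl : l = C c + ∑ i, C (a i) * X i := affine (le_of_eq hdeg)
    have key : ∀ p : Fin 4 → ℂ,
        eval p l = c + (a 0 * p 0 + a 1 * p 1 + a 2 * p 2 + a 3 * p 3) := by
      intro p
      rw [hl]
      simp [Fin.sum_univ_four]
    have keyf : ∀ p : Fin 4 → ℂ,
        eval p l * eval p g = p 0 * p 2 ^ 3 + p 1 * p 2 ^ 2 * p 3 + p 3 ^ 4 := by
      intro p
      rw [← map_mul, ← hfg]
      simp
    have contra : ∀ p : Fin 4 → ℂ,
        c + (a 0 * p 0 + a 1 * p 1 + a 2 * p 2 + a 3 * p 3) = 0 →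
        p 0 * p 2 ^ 3 + p 1 * p 2 ^ 2 * p 3 + p 3 ^ 4 = 0 := by
      intro p hp
      rw [← keyf p, key p, hp, zero_mul]
    have hne : ¬ (a 0 = 0 ∧ a 1 = 0 ∧ a 2 = 0 ∧ a 3 = 0) := by
      rintro ⟨h0, h1, h2, h3⟩
      have : l = C c := by
        rw [hl, Fin.sum_univ_four, h0, h1, h2, h3]
        simp
      rw [this] at hdeg
      simp [totalDegree_C] at hdeg
    by_cases h2 : a 2 ≠ 0
    · have := contra ![0, 0, -(a 3 + c) / a 2, 1] (by
        simp
        try field_simp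
        try ring)
      simp at this
    push_neg at h2
    by_cases h3 : a 3 ≠ 0
    · by_cases hcc : c ≠ 0
      · have := contra ![0, 0, 0, -c / a 3] (by simp [h2]; field_simp; ring)
        simp [div_eq_zero_iff, h3] at this
        exact hcc this
      push_neg at hcc
      by_cases h1 : a 1 ≠ 0
      · have := contra ![1, -(a 0) / a 1, 1, 0] (by simp [h2, hcc]; field_simp; ring)
        simp at this
      push_neg at h1
      by_cases h0 : a 0 ≠ 0
      · have := contra ![-(a 3) / a 0, a 3 / a 0, 1, 1] (by
          simp [h2, hcc, h1]
          field_simp; ring)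
        simp at this
        field_simp at this
        simp [h0] at this
      push_neg at h0
      have := contra ![1, 0, 1, 0] (by simp [h0, h1, h2, hcc])
      simp at this
    push_neg at h3
    by_cases h0 : a 0 ≠ 0
    · by_cases h1 : a 1 ≠ 0
      · have := contra ![1, -(a 0 + c) / a 1, 1, 0] (by simp [h2, h3]; field_simp; ring)
        simp at this
      push_neg at h1
      by_cases hcc : c ≠ 0
      · have := contra ![-c / a 0, 0, 1, 0] (by simp [h1, h2, h3]; field_simp; ring)
        simp [div_eq_zero_iff, h0] at this
        exact hcc this
      push_neg at hcc
      have := contra ![0, 0, 1, 1] (by simp [h1, h2, h3, hcc])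
      simp at this
    push_neg at h0
    by_cases h1 : a 1 ≠ 0
    · have := contra ![1, -c / a 1, 1, 0] (by simp [h0, h2, h3]; field_simp; ring)
      simp at this
    push_neg at h1
    exact hne ⟨h0, h1, h2, h3⟩
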